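/- arXiv:0806.2674 — 2 statements merged into one kernel-verified Lean document; each statement's English description precedes it below -/
import Mathlib

section
/- Under hypotheses (H1) and (H2), for every λ < 0, almost surely (1/n)·( log‖(x_{n+2}(λ), x_{n+1}(λ))‖ − log|x_{n+1}(λ)| ) → 0 as n → ∞, where ‖(u,v)‖ = (|u|² + |v|²)^{1/2} for (u,v) ∈ ℂ². -/
open MeasureTheory ProbabilityTheory Filter

open scoped Topology

/-- The second-order linear recurrence `x₀ = 0`, `x₁ = 1`,
`x_{n+1} = ((λ−|a_n|²−|b_n|²)/(a_{n+1}* b_n))·x_n − ((a_n b_{n−1}*)/(a_{n+1}* b_n))·x_{n−1}`. -/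
noncomputable def xseq (a b : ℕ → ℂ) (lam : ℂ) : ℕ → ℂ
  | 0 => 0
  | 1 => 1
  | n + 2 =>
    ((lam - (‖a (n + 1)‖ ^ 2 : ℝ) - (‖b (n + 1)‖ ^ 2 : ℝ)) /
        ((starRingEnd ℂ) (a (n + 2)) * b (n + 1))) * xseq a b lam (n + 1) -
      ((a (n + 1) * (starRingEnd ℂ) (b n)) /
        ((starRingEnd ℂ) (a (n + 2)) * b (n + 1))) * xseq a b lam n

noncomputable def dd (A B : ℕ → ℝ) (l : ℝ) : ℕ → ℝ
  | 0 => 1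
  | 1 => l + A 1 + B 1
  | n + 2 => (l + A (n + 2) + B (n + 2)) * dd A B l (n + 1) - A (n + 2) * B (n + 1) * dd A B l n

theorem dd_pos_lb {A B : ℕ → ℝ} {l : ℝ} (hl : 0 < l) (hA : ∀ n, 0 ≤ A n) (hB : ∀ n, 0 ≤ B n) :
    ∀ n, 0 < dd A B l n ∧ (l + B (n + 1)) * dd A B l n ≤ dd A B l (n + 1) := by
  intro n
  induction n with
  | zero =>
    constructor
    · simp [dd]
    · simp only [dd]
      nlinarith [hA 1, hB 1]
  | succ n ih =>
    obtain ⟨h1, h2⟩ := ih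
    have hp : 0 < dd A B l (n + 1) :=
      lt_of_lt_of_le (mul_pos (by linarith [hB (n + 1)]) h1) h2
    refine ⟨hp, ?_⟩
    show (l + B (n + 2)) * dd A B l (n + 1) ≤
      (l + A (n + 2) + B (n + 2)) * dd A B l (n + 1) - A (n + 2) * B (n + 1) * dd A B l n
    have hBd : B (n + 1) * dd A B l n ≤ dd A B l (n + 1) := by nlinarith [hB (n+1), h1, hl]
    nlinarith [hA (n + 2)]

theorem dd_ub {A B : ℕ → ℝ} {l : ℝ} (hl : 0 < l) (hA : ∀ n, 0 ≤ A n) (hB : ∀ n, 0 ≤ B n) :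
    ∀ n, dd A B l (n + 1) ≤ (l + A (n + 1) + B (n + 1)) * dd A B l n := by
  intro n
  match n with
  | 0 => simp [dd]
  | m + 1 =>
    show (l + A (m + 2) + B (m + 2)) * dd A B l (m + 1) - A (m + 2) * B (m + 1) * dd A B l m ≤
      (l + A (m + 2) + B (m + 2)) * dd A B l (m + 1)
    have h0 := (dd_pos_lb hl hA hB m).1
    nlinarith [mul_nonneg (mul_nonneg (hA (m + 2)) (hB (m + 1))) h0.le]

theorem xseq_eq_dd (a b : ℕ → ℂ) (lam : ℝ)
    (ha : ∀ n, a n ≠ 0) (hb : ∀ n, b n ≠ 0) :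
    ∀ n, xseq a b (lam : ℂ) (n + 1) *
        (∏ k ∈ Finset.range n, ((starRingEnd ℂ) (a (k + 2)) * b (k + 1))) =
      (-1 : ℂ) ^ n *
        ((dd (fun m => ‖a m‖ ^ 2) (fun m => ‖b m‖ ^ 2) (-lam) n : ℝ) : ℂ) := by
  have key : ∀ n, (xseq a b (lam : ℂ) (n + 1) *
        (∏ k ∈ Finset.range n, ((starRingEnd ℂ) (a (k + 2)) * b (k + 1))) =
      (-1 : ℂ) ^ n *
        ((dd (fun m => ‖a m‖ ^ 2) (fun m => ‖b m‖ ^ 2) (-lam) n : ℝ) : ℂ)) ∧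
      (xseq a b (lam : ℂ) (n + 2) *
        (∏ k ∈ Finset.range (n + 1), ((starRingEnd ℂ) (a (k + 2)) * b (k + 1))) =
      (-1 : ℂ) ^ (n + 1) *
        ((dd (fun m => ‖a m‖ ^ 2) (fun m => ‖b m‖ ^ 2) (-lam) (n + 1) : ℝ) : ℂ)) := by
    intro n
    induction n with
    | zero =>
      constructor
      · simp [xseq, dd]
      · have hD : (starRingEnd ℂ) (a 2) * b 1 ≠ 0 := by
          exact mul_ne_zero (by simpa using ha 2) (hb 1)
        simp only [xseq, dd, Finset.prod_range_one]
        field_simp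
        push_cast
        simp only [Finset.prod_range_one, zero_add, mul_div_assoc, div_self hD, mul_one]
        ring
    | succ n ih =>
      obtain ⟨ih1, ih2⟩ := ih
      refine ⟨ih2, ?_⟩
      set A : ℕ → ℝ := fun m => ‖a m‖ ^ 2 with hAdef
      set B : ℕ → ℝ := fun m => ‖b m‖ ^ 2 with hBdef
      have hD : (starRingEnd ℂ) (a (n + 3)) * b (n + 2) ≠ 0 :=
        mul_ne_zero (by simpa using ha (n + 3)) (hb (n + 2))
      have hD' : (starRingEnd ℂ) (a (n + 2)) * b (n + 1) ≠ 0 :=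
        mul_ne_zero (by simpa using ha (n + 2)) (hb (n + 1))
      have hprod : (∏ k ∈ Finset.range (n + 2), ((starRingEnd ℂ) (a (k + 2)) * b (k + 1))) =
          (∏ k ∈ Finset.range (n + 1), ((starRingEnd ℂ) (a (k + 2)) * b (k + 1))) *
          ((starRingEnd ℂ) (a (n + 3)) * b (n + 2)) := Finset.prod_range_succ _ _
      have hprod' : (∏ k ∈ Finset.range (n + 1), ((starRingEnd ℂ) (a (k + 2)) * b (k + 1))) =
          (∏ k ∈ Finset.range n, ((starRingEnd ℂ) (a (k + 2)) * b (k + 1))) *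
          ((starRingEnd ℂ) (a (n + 2)) * b (n + 1)) := Finset.prod_range_succ _ _
      have hxs : xseq a b (lam : ℂ) (n + 3) =
          ((lam - (A (n + 2) : ℝ) - (B (n + 2) : ℝ)) /
            ((starRingEnd ℂ) (a (n + 3)) * b (n + 2))) * xseq a b (lam : ℂ) (n + 2) -
          ((a (n + 2) * (starRingEnd ℂ) (b (n + 1))) /
            ((starRingEnd ℂ) (a (n + 3)) * b (n + 2))) * xseq a b (lam : ℂ) (n + 1) := rfl
      have hdd : dd A B (-lam) (n + 2) =
          (-lam + A (n + 2) + B (n + 2)) * dd A B (-lam) (n + 1) -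
            A (n + 2) * B (n + 1) * dd A B (-lam) n := rfl
      have habs : a (n + 2) * (starRingEnd ℂ) (b (n + 1)) *
          ((starRingEnd ℂ) (a (n + 2)) * b (n + 1)) = ((A (n + 2) * B (n + 1) : ℝ) : ℂ) := by
        have h1 := Complex.mul_conj (a (n + 2))
        have h2 := Complex.mul_conj (b (n + 1))
        have e1 : (A (n + 2) : ℝ) = Complex.normSq (a (n + 2)) := Complex.sq_norm _
        have e2 : (B (n + 1) : ℝ) = Complex.normSq (b (n + 1)) := Complex.sq_norm _
        push_cast [e1, e2]
        rw [← h1, ← h2]; ring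
      have hx3 : xseq a b (lam : ℂ) (n + 3) * ((starRingEnd ℂ) (a (n + 3)) * b (n + 2)) =
          ((lam : ℂ) - ((A (n + 2) : ℝ) : ℂ) - ((B (n + 2) : ℝ) : ℂ)) * xseq a b (lam : ℂ) (n + 2) -
            (a (n + 2) * (starRingEnd ℂ) (b (n + 1))) * xseq a b (lam : ℂ) (n + 1) := by
        rw [hxs]; field_simp; exact mul_div_cancel_left₀ _ hD
      calc xseq a b (lam : ℂ) (n + 3) *
            ∏ k ∈ Finset.range (n + 2), ((starRingEnd ℂ) (a (k + 2)) * b (k + 1))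
          = (xseq a b (lam : ℂ) (n + 3) * ((starRingEnd ℂ) (a (n + 3)) * b (n + 2))) *
              ∏ k ∈ Finset.range (n + 1), ((starRingEnd ℂ) (a (k + 2)) * b (k + 1)) := by
            rw [hprod]; ring
        _ = (((lam : ℂ) - ((A (n + 2) : ℝ) : ℂ) - ((B (n + 2) : ℝ) : ℂ)) * xseq a b (lam : ℂ) (n + 2) -
              (a (n + 2) * (starRingEnd ℂ) (b (n + 1))) * xseq a b (lam : ℂ) (n + 1)) *
              ∏ k ∈ Finset.range (n + 1), ((starRingEnd ℂ) (a (k + 2)) * b (k + 1)) := by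
            rw [hx3]
        _ = ((lam : ℂ) - ((A (n + 2) : ℝ) : ℂ) - ((B (n + 2) : ℝ) : ℂ)) *
              (xseq a b (lam : ℂ) (n + 2) *
                ∏ k ∈ Finset.range (n + 1), ((starRingEnd ℂ) (a (k + 2)) * b (k + 1))) -
              (a (n + 2) * (starRingEnd ℂ) (b (n + 1)) * ((starRingEnd ℂ) (a (n + 2)) * b (n + 1))) *
              (xseq a b (lam : ℂ) (n + 1) *
                ∏ k ∈ Finset.range n, ((starRingEnd ℂ) (a (k + 2)) * b (k + 1))) := by
            rw [hprod']; ring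
        _ = ((lam : ℂ) - ((A (n + 2) : ℝ) : ℂ) - ((B (n + 2) : ℝ) : ℂ)) *
              ((-1 : ℂ) ^ (n + 1) * ((dd A B (-lam) (n + 1) : ℝ) : ℂ)) -
              ((A (n + 2) * B (n + 1) : ℝ) : ℂ) *
              ((-1 : ℂ) ^ n * ((dd A B (-lam) n : ℝ) : ℂ)) := by
            rw [ih1, ih2, habs]
        _ = (-1 : ℂ) ^ (n + 2) * ((dd A B (-lam) (n + 2) : ℝ) : ℂ) := by
            rw [hdd]; push_cast; ring
  intro n; exact (key n).1

theorem abs_log_le_of_between {x lo hi : ℝ} (hlo : 0 < lo) (h1 : lo ≤ x) (h2 : x ≤ hi) :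
    |Real.log x| ≤ |Real.log lo| + |Real.log hi| := by
  have hx : 0 < x := lt_of_lt_of_le hlo h1
  rcases le_or_gt 0 (Real.log x) with h | h
  · rw [abs_of_nonneg h]
    have := Real.log_le_log hx h2
    have h3 : Real.log hi ≤ |Real.log hi| := le_abs_self _
    have h4 : (0:ℝ) ≤ |Real.log lo| := abs_nonneg _
    linarith
  · rw [abs_of_neg h]
    have := Real.log_le_log hlo h1
    have h3 : -Real.log lo ≤ |Real.log lo| := neg_le_abs _
    have h4 : (0:ℝ) ≤ |Real.log hi| := abs_nonneg _
    linarith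

theorem abs_xseq_eq (a b : ℕ → ℂ) (lam : ℝ)
    (ha : ∀ n, a n ≠ 0) (hb : ∀ n, b n ≠ 0) (n : ℕ) :
    ‖xseq a b (lam : ℂ) (n + 1)‖ *
        (∏ k ∈ Finset.range n, (‖a (k + 2)‖ * ‖b (k + 1)‖)) =
      |dd (fun m => ‖a m‖ ^ 2) (fun m => ‖b m‖ ^ 2) (-lam) n| := by
  have h := congrArg (fun z : ℂ => ‖z‖) (xseq_eq_dd a b lam ha hb n)
  rw [norm_mul, norm_mul, norm_prod] at h
  simpa [Complex.norm_conj, norm_mul, norm_pow, Complex.norm_real] using h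

theorem xseq_log_bound (a b : ℕ → ℂ) (lam : ℝ) (hlam : lam < 0)
    (ha : ∀ n, a n ≠ 0) (hb : ∀ n, b n ≠ 0) (n : ℕ) :
    0 ≤ Real.log (Real.sqrt
          (‖xseq a b (lam : ℂ) (n + 2)‖ ^ 2 +
           ‖xseq a b (lam : ℂ) (n + 1)‖ ^ 2)) -
        Real.log (‖xseq a b (lam : ℂ) (n + 1)‖) ∧
    Real.log (Real.sqrt
          (‖xseq a b (lam : ℂ) (n + 2)‖ ^ 2 +
           ‖xseq a b (lam : ℂ) (n + 1)‖ ^ 2)) -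
        Real.log (‖xseq a b (lam : ℂ) (n + 1)‖) ≤
      (Real.log 2 + Real.log 3 + 2 * |Real.log (-lam)|) +
        (2 * |Real.log (‖a (n + 1)‖)| +
         3 * |Real.log (‖b (n + 1)‖)| +
         |Real.log (‖a (n + 2)‖)|) := by
  set l : ℝ := -lam with hldef
  have hl : 0 < l := by simp [hldef]; linarith
  set A : ℕ → ℝ := fun m => ‖a m‖ ^ 2 with hAdef
  set B : ℕ → ℝ := fun m => ‖b m‖ ^ 2 with hBdef
  have hA : ∀ m, 0 ≤ A m := fun m => sq_nonneg _
  have hB : ∀ m, 0 ≤ B m := fun m => sq_nonneg _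
  have haabs : ∀ m, 0 < ‖a m‖ := fun m => norm_pos_iff.mpr (ha m)
  have hbabs : ∀ m, 0 < ‖b m‖ := fun m => norm_pos_iff.mpr (hb m)
  have hApos : ∀ m, 0 < A m := fun m => pow_pos (haabs m) 2
  have hBpos : ∀ m, 0 < B m := fun m => pow_pos (hbabs m) 2
  have dpos : ∀ m, 0 < dd A B l m := fun m => (dd_pos_lb hl hA hB m).1
  set Q : ℕ → ℝ := fun m =>
    ∏ k ∈ Finset.range m, (‖a (k + 2)‖ * ‖b (k + 1)‖) with hQdef
  have hQpos : ∀ m, 0 < Q m := by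
    intro m
    exact Finset.prod_pos fun k _ => mul_pos (haabs _) (hbabs _)
  have habsx : ∀ m, ‖xseq a b (lam : ℂ) (m + 1)‖ = dd A B l m / Q m := by
    intro m
    have h := abs_xseq_eq a b lam ha hb m
    rw [abs_of_pos (dpos m)] at h
    rw [eq_div_iff (hQpos m).ne']
    exact h
  set u : ℝ := ‖xseq a b (lam : ℂ) (n + 2)‖ with hudef
  set v : ℝ := ‖xseq a b (lam : ℂ) (n + 1)‖ with hvdef
  have hu : u = dd A B l (n + 1) / Q (n + 1) := habsx (n + 1)
  have hv : v = dd A B l n / Q n := habsx n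
  have hupos : 0 < u := by rw [hu]; exact div_pos (dpos _) (hQpos _)
  have hvpos : 0 < v := by rw [hv]; exact div_pos (dpos _) (hQpos _)
  set r : ℝ := u / v with hrdef
  have hrpos : 0 < r := div_pos hupos hvpos
  -- part 1 : nonnegativity
  have hsqrt_ge : v ≤ Real.sqrt (u ^ 2 + v ^ 2) := by
    rw [Real.le_sqrt hvpos.le (by positivity)]
    nlinarith [sq_nonneg u]
  have part1 : Real.log v ≤ Real.log (Real.sqrt (u ^ 2 + v ^ 2)) :=
    Real.log_le_log hvpos hsqrt_ge
  -- part 2 : upper bound by log (1 + r)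
  have hsqrt_le : Real.sqrt (u ^ 2 + v ^ 2) ≤ u + v := by
    have h1 : u ^ 2 + v ^ 2 ≤ (u + v) ^ 2 := by nlinarith [hupos.le, hvpos.le]
    calc Real.sqrt (u ^ 2 + v ^ 2) ≤ Real.sqrt ((u + v) ^ 2) := Real.sqrt_le_sqrt h1
      _ = u + v := Real.sqrt_sq (by positivity)
  have huv : u + v = v * (1 + r) := by
    rw [hrdef]; field_simp; ring
  have part2 : Real.log (Real.sqrt (u ^ 2 + v ^ 2)) - Real.log v ≤ Real.log (1 + r) := by
    have h2 : Real.log (Real.sqrt (u ^ 2 + v ^ 2)) ≤ Real.log (u + v) :=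
      Real.log_le_log (lt_of_lt_of_le hvpos hsqrt_ge) hsqrt_le
    have h3 : Real.log (u + v) = Real.log v + Real.log (1 + r) := by
      rw [huv, Real.log_mul hvpos.ne' (by positivity)]
    linarith
  -- log (1 + r) ≤ log 2 + |log r|
  have part3 : Real.log (1 + r) ≤ Real.log 2 + |Real.log r| := by
    rcases le_or_gt r 1 with h | h
    · have : Real.log (1 + r) ≤ Real.log 2 :=
        Real.log_le_log (by positivity) (by linarith)
      have := abs_nonneg (Real.log r)
      linarith
    · have h4 : Real.log (1 + r) ≤ Real.log (2 * r) :=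
        Real.log_le_log (by positivity) (by linarith)
      rw [Real.log_mul two_ne_zero hrpos.ne'] at h4
      have := le_abs_self (Real.log r)
      linarith
  -- r in terms of rho
  set ρ : ℝ := dd A B l (n + 1) / dd A B l n with hρdef
  have hQsucc : Q (n + 1) = Q n * (‖a (n + 2)‖ * ‖b (n + 1)‖) :=
    Finset.prod_range_succ _ _
  have hr_eq : r = ρ / (‖a (n + 2)‖ * ‖b (n + 1)‖) := by
    rw [hrdef, hu, hv, hQsucc, hρdef]
    field_simp [(hQpos n).ne', (dpos n).ne', (haabs (n + 2)).ne', (hbabs (n + 1)).ne']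
  have hρ1 : l ≤ ρ := by
    rw [hρdef, le_div_iff₀ (dpos n)]
    have h5 := (dd_pos_lb hl hA hB n).2
    nlinarith [mul_nonneg (hB (n + 1)) (dpos n).le]
  have hρ2 : ρ ≤ l + A (n + 1) + B (n + 1) := by
    rw [hρdef, div_le_iff₀ (dpos n)]
    exact dd_ub hl hA hB n
  have hρpos : 0 < ρ := lt_of_lt_of_le hl hρ1
  have hlogr : Real.log r = Real.log ρ - Real.log (‖a (n + 2)‖) -
      Real.log (‖b (n + 1)‖) := by
    rw [hr_eq, Real.log_div hρpos.ne' (mul_pos (haabs _) (hbabs _)).ne',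
      Real.log_mul (haabs _).ne' (hbabs _).ne']
    ring
  have part4 : |Real.log r| ≤ |Real.log ρ| + |Real.log (‖a (n + 2)‖)| +
      |Real.log (‖b (n + 1)‖)| := by
    rw [hlogr]
    refine abs_le.mpr ⟨?_, ?_⟩
    · linarith [neg_abs_le (Real.log ρ), le_abs_self (Real.log (‖a (n + 2)‖)),
        le_abs_self (Real.log (‖b (n + 1)‖))]
    · linarith [le_abs_self (Real.log ρ), neg_abs_le (Real.log (‖a (n + 2)‖)),
        neg_abs_le (Real.log (‖b (n + 1)‖))]
  have part5 : |Real.log ρ| ≤ |Real.log l| + |Real.log (l + A (n + 1) + B (n + 1))| :=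
    abs_log_le_of_between hl hρ1 hρ2
  -- bound |log c|
  have part6 : |Real.log (l + A (n + 1) + B (n + 1))| ≤
      Real.log 3 + |Real.log l| + 2 * |Real.log (‖a (n + 1)‖)| +
        2 * |Real.log (‖b (n + 1)‖)| := by
    set M : ℝ := max l (max (A (n + 1)) (B (n + 1))) with hMdef
    have hMpos : 0 < M := lt_of_lt_of_le hl (le_max_left _ _)
    have hcM : l + A (n + 1) + B (n + 1) ≤ 3 * M := by
      have h6 : l ≤ M := le_max_left _ _
      have h7 : A (n + 1) ≤ M := le_trans (le_max_left _ _) (le_max_right _ _)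
      have h8 : B (n + 1) ≤ M := le_trans (le_max_right _ _) (le_max_right _ _)
      linarith
    have hlogM : Real.log M ≤ |Real.log l| + 2 * |Real.log (‖a (n + 1)‖)| +
        2 * |Real.log (‖b (n + 1)‖)| := by
      have e1 : Real.log (A (n + 1)) = 2 * Real.log (‖a (n + 1)‖) := by
        rw [hAdef]; simp [Real.log_pow]
      have e2 : Real.log (B (n + 1)) = 2 * Real.log (‖b (n + 1)‖) := by
        rw [hBdef]; simp [Real.log_pow]
      have n1 := abs_nonneg (Real.log l)
      have n2 := abs_nonneg (Real.log (‖a (n + 1)‖))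
      have n3 := abs_nonneg (Real.log (‖b (n + 1)‖))
      rcases max_choice l (max (A (n + 1)) (B (n + 1))) with h | h
      · rw [hMdef, h]
        linarith [le_abs_self (Real.log l)]
      · rcases max_choice (A (n + 1)) (B (n + 1)) with h' | h'
        · rw [hMdef, h, h', e1]
          have := le_abs_self (Real.log (‖a (n + 1)‖))
          linarith
        · rw [hMdef, h, h', e2]
          have := le_abs_self (Real.log (‖b (n + 1)‖))
          linarith
    have hup : Real.log (l + A (n + 1) + B (n + 1)) ≤ Real.log 3 + Real.log M := by
      have h9 : Real.log (l + A (n + 1) + B (n + 1)) ≤ Real.log (3 * M) :=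
        Real.log_le_log (by positivity) hcM
      rwa [Real.log_mul three_ne_zero hMpos.ne'] at h9
    have hdown : Real.log l ≤ Real.log (l + A (n + 1) + B (n + 1)) :=
      Real.log_le_log hl (by linarith [hApos (n + 1), hBpos (n + 1)])
    have hlog3 : (0:ℝ) ≤ Real.log 3 := Real.log_nonneg (by norm_num)
    have n1 := abs_nonneg (Real.log l)
    have n2 := abs_nonneg (Real.log (‖a (n + 1)‖))
    have n3 := abs_nonneg (Real.log (‖b (n + 1)‖))
    refine abs_le.mpr ⟨?_, ?_⟩
    · linarith [neg_abs_le (Real.log l)]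
    · linarith
  refine ⟨by linarith, ?_⟩
  have final := part2
  have := abs_nonneg (Real.log (‖b (n + 1)‖))
  linarith

theorem ae_ne_zero {Ω : Type*} [MeasureSpace Ω] [IsProbabilityMeasure (ℙ : Measure Ω)]
    (π : Measure ℂ) (X : ℕ → Ω → ℂ) (hmeas : ∀ n, Measurable (X n))
    (hlaw : ∀ n, Measure.map (X n) ℙ = π) (hac : π ≪ (volume : Measure ℂ)) :
    ∀ᵐ ω ∂ℙ, ∀ n, X n ω ≠ 0 := by
  rw [ae_all_iff]
  intro n
  have h0 : π {0} = 0 := hac (measure_singleton 0)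
  have h1 : ℙ (X n ⁻¹' {0}) = 0 := by
    rw [← Measure.map_apply (hmeas n) (measurableSet_singleton 0), hlaw n]
    exact h0
  rw [ae_iff]
  simpa [Set.preimage, Set.mem_singleton_iff] using h1

theorem tendsto_shift_div {f : ℕ → ℝ} (hf : ∀ n, 0 ≤ f n)
    (h : Tendsto (fun n : ℕ => f n / n) atTop (𝓝 0)) (j : ℕ) :
    Tendsto (fun n : ℕ => f (n + j) / n) atTop (𝓝 0) := by
  have h2 : Tendsto (fun n : ℕ => 2 * (f (n + j) / (n + j))) atTop (𝓝 0) := by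
    have := (h.comp (tendsto_add_atTop_nat j)).const_mul (2 : ℝ)
    simpa using this
  apply squeeze_zero' ?_ ?_ h2
  · filter_upwards [eventually_ge_atTop 1] with n hn
    exact div_nonneg (hf _) (Nat.cast_nonneg _)
  · filter_upwards [eventually_ge_atTop (max j 1)] with n hn
    have hj : j ≤ n := le_trans (le_max_left _ _) hn
    have h1 : 1 ≤ n := le_trans (le_max_right _ _) hn
    have hn0 : (0:ℝ) < n := by exact_mod_cast h1
    have hnj : (0:ℝ) < (n:ℝ) + j := by positivity
    have hcast : ((n + j : ℕ) : ℝ) = (n : ℝ) + j := by push_cast; ring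
    have hjn : (j:ℝ) ≤ n := by exact_mod_cast hj
    rw [div_le_iff₀ hn0,
      show 2 * (f (n + j) / ((n:ℝ) + j)) = 2 * f (n + j) / ((n:ℝ) + j) from by ring,
      div_mul_eq_mul_div, le_div_iff₀ hnj]
    nlinarith [hf (n + j)]
  
theorem ae_log_abs_div_tendsto {Ω : Type*} [MeasureSpace Ω]
    [IsProbabilityMeasure (ℙ : Measure Ω)]
    (π : Measure ℂ) (X : ℕ → Ω → ℂ) (hmeas : ∀ n, Measurable (X n))
    (hlaw : ∀ n, Measure.map (X n) ℙ = π)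
    (H1 : Integrable (fun x : ℂ => (Real.log (‖x‖)) ^ 2) π) :
    ∀ᵐ ω ∂ℙ, Tendsto (fun n : ℕ => |Real.log (‖X n ω‖)| / n) atTop (𝓝 0) := by
  set L : ℕ → Ω → ℝ := fun n ω => |Real.log (‖X n ω‖)| with hLdef
  have hLmeas : ∀ n, Measurable fun ω => (Real.log (‖X n ω‖)) ^ 2 := fun n =>
    (Real.measurable_log.comp (continuous_norm.measurable.comp (hmeas n))).pow_const 2
  set C : ℝ := ∫ x, (Real.log (‖x‖)) ^ 2 ∂π with hCdef
  have hlint : ∀ n, ∫⁻ ω, ENNReal.ofReal ((Real.log (‖X n ω‖)) ^ 2) ∂ℙ =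
      ENNReal.ofReal C := by
    intro n
    have h1 : ∫⁻ ω, ENNReal.ofReal ((Real.log (‖X n ω‖)) ^ 2) ∂ℙ =
        ∫⁻ x, ENNReal.ofReal ((Real.log (‖x‖)) ^ 2) ∂π := by
      have hfm : Measurable fun x : ℂ => ENNReal.ofReal ((Real.log (‖x‖)) ^ 2) :=
        ((Real.measurable_log.comp continuous_norm.measurable).pow_const 2).ennreal_ofReal
      rw [← hlaw n, lintegral_map hfm (hmeas n)]
    rw [h1, ← ofReal_integral_eq_lintegral_ofReal H1 (Filter.Eventually.of_forall fun x => sq_nonneg _)]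
  have key : ∀ k : ℕ, ∀ᵐ ω ∂ℙ, ∀ᶠ n in atTop,
      L (n + 1) ω < (1 / ((k : ℝ) + 1)) * ((n : ℝ) + 1) := by
    intro k
    set ε : ℝ := 1 / ((k : ℝ) + 1) with hεdef
    have hε : 0 < ε := by positivity
    set s : ℕ → Set Ω := fun n => {ω | ε * ((n : ℝ) + 1) ≤ L (n + 1) ω} with hsdef
    have hbound : ∀ n, ℙ (s n) ≤ ENNReal.ofReal (C / ε ^ 2 * (1 / ((n : ℝ) + 1) ^ 2)) := by
      intro n
      have hsub : s n ⊆ {ω | ENNReal.ofReal ((ε * ((n : ℝ) + 1)) ^ 2) ≤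
          ENNReal.ofReal ((Real.log (‖X (n + 1) ω‖)) ^ 2)} := by
        intro ω hω
        simp only [hsdef, Set.mem_setOf_eq] at hω ⊢
        apply ENNReal.ofReal_le_ofReal
        have h0 : 0 ≤ ε * ((n : ℝ) + 1) := by positivity
        have h1 : (ε * ((n : ℝ) + 1)) ^ 2 ≤ (L (n + 1) ω) ^ 2 := by nlinarith [abs_nonneg (Real.log (‖X (n + 1) ω‖))]
        calc (ε * ((n : ℝ) + 1)) ^ 2 ≤ (L (n + 1) ω) ^ 2 := h1
          _ = (Real.log (‖X (n + 1) ω‖)) ^ 2 := by rw [hLdef]; exact sq_abs _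
      have h2 := measure_mono (μ := (ℙ : Measure Ω)) hsub
      have h3 := meas_ge_le_lintegral_div (μ := (ℙ : Measure Ω))
        (f := fun ω => ENNReal.ofReal ((Real.log (‖X (n + 1) ω‖)) ^ 2))
        ((ENNReal.measurable_ofReal.comp (hLmeas (n + 1))).aemeasurable)
        (ε := ENNReal.ofReal ((ε * ((n : ℝ) + 1)) ^ 2))
        (ENNReal.ofReal_pos.mpr (by positivity)).ne' ENNReal.ofReal_ne_top
      rw [hlint (n + 1)] at h3
      calc ℙ (s n) ≤ _ := h2
        _ ≤ ENNReal.ofReal C / ENNReal.ofReal ((ε * ((n : ℝ) + 1)) ^ 2) := h3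
        _ = ENNReal.ofReal (C / (ε * ((n : ℝ) + 1)) ^ 2) :=
            (ENNReal.ofReal_div_of_pos (by positivity)).symm
        _ = ENNReal.ofReal (C / ε ^ 2 * (1 / ((n : ℝ) + 1) ^ 2)) := by
            congr 1
            rw [mul_pow, mul_one_div, div_div]
    have hsummable : Summable (fun n : ℕ => C / ε ^ 2 * (1 / ((n : ℝ) + 1) ^ 2)) := by
      apply Summable.mul_left
      have h := (Real.summable_one_div_nat_pow (p := 2)).mpr (by norm_num)
      have h2 := (summable_nat_add_iff 1).mpr h
      refine h2.congr fun m => ?_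
      push_cast
      ring
    have hCnn : 0 ≤ C := integral_nonneg fun x => sq_nonneg _
    have hsum : ∑' n, ℙ (s n) ≠ ⊤ := by
      have hle : ∑' n, ℙ (s n) ≤
          ∑' (n : ℕ), ENNReal.ofReal (C / ε ^ 2 * (1 / ((n : ℝ) + 1) ^ 2)) :=
        ENNReal.tsum_le_tsum hbound
      have heq : ∑' (n : ℕ), ENNReal.ofReal (C / ε ^ 2 * (1 / ((n : ℝ) + 1) ^ 2)) =
          ENNReal.ofReal (∑' (n : ℕ), C / ε ^ 2 * (1 / ((n : ℝ) + 1) ^ 2)) :=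
        (ENNReal.ofReal_tsum_of_nonneg (fun m => by positivity) hsummable).symm
      exact ne_top_of_le_ne_top (by rw [heq]; exact ENNReal.ofReal_ne_top) hle
    filter_upwards [ae_eventually_notMem hsum] with ω hω
    filter_upwards [hω] with n hn
    simp only [hsdef, Set.mem_setOf_eq, not_le] at hn
    rw [hεdef]
    linarith
  rw [← ae_all_iff] at key
  filter_upwards [key] with ω hω
  rw [tendsto_order]
  constructor
  · intro c hc
    filter_upwards with n
    have h0 : 0 ≤ L n ω / n := div_nonneg (abs_nonneg _) (Nat.cast_nonneg _)
    exact lt_of_lt_of_le hc h0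
  · intro c hc
    obtain ⟨k, hk⟩ := exists_nat_one_div_lt hc
    have h5 := (hω k).and (eventually_ge_atTop 0)
    rw [eventually_atTop] at h5 ⊢
    obtain ⟨N, hN⟩ := h5
    refine ⟨N + 1, fun n hn => ?_⟩
    obtain ⟨m, rfl⟩ : ∃ m, n = m + 1 := ⟨n - 1, by omega⟩
    have h6 := (hN m (by omega)).1
    have hm : (0 : ℝ) < (m : ℝ) + 1 := by positivity
    have hcast : ((m + 1 : ℕ) : ℝ) = (m : ℝ) + 1 := by push_cast; ring
    show L (m + 1) ω / ((m + 1 : ℕ) : ℝ) < c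
    rw [hcast, div_lt_iff₀ hm]
    calc L (m + 1) ω < 1 / ((k : ℝ) + 1) * ((m : ℝ) + 1) := h6
      _ ≤ c * ((m : ℝ) + 1) := by nlinarith

theorem statement18
    {Ω : Type*} [MeasureSpace Ω] [IsProbabilityMeasure (ℙ : Measure Ω)]
    (πa πb : Measure ℂ) [IsProbabilityMeasure πa] [IsProbabilityMeasure πb]
    (a b : ℕ → Ω → ℂ)
    (ha_meas : ∀ n, Measurable (a n)) (hb_meas : ∀ n, Measurable (b n))
    (ha_law : ∀ n, Measure.map (a n) ℙ = πa)
    (hb_law : ∀ n, Measure.map (b n) ℙ = πb)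
    (h_indep : iIndepFun (Sum.elim a b) ℙ)
    -- (H1)
    (H1a : Integrable (fun x : ℂ => (Real.log ‖x‖) ^ 2) πa)
    (H1b : Integrable (fun x : ℂ => (Real.log ‖x‖) ^ 2) πb)
    -- (H2)
    (H2a : πa ≪ (volume : Measure ℂ)) (H2b : πb ≪ (volume : Measure ℂ))
    (lam : ℝ) (hlam : lam < 0) :
    ∀ᵐ ω ∂ℙ, Tendsto
      (fun n : ℕ =>
        (1 / (n : ℝ)) *
          (Real.log (Real.sqrt
            (‖xseq (fun m => a m ω) (fun m => b m ω) (lam : ℂ) (n + 2)‖ ^ 2 +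
             ‖xseq (fun m => a m ω) (fun m => b m ω) (lam : ℂ) (n + 1)‖ ^ 2)) -
           Real.log ‖
            (xseq (fun m => a m ω) (fun m => b m ω) (lam : ℂ) (n + 1))‖))
      atTop (nhds 0) := by
  have hane := ae_ne_zero πa a ha_meas ha_law H2a
  have hbne := ae_ne_zero πb b hb_meas hb_law H2b
  have haT := ae_log_abs_div_tendsto πa a ha_meas ha_law H1a
  have hbT := ae_log_abs_div_tendsto πb b hb_meas hb_law H1b
  filter_upwards [hane, hbne, haT, hbT] with ω h1 h2 h3 h4
  have hG : Tendsto (fun n : ℕ => (1 / (n : ℝ)) *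
      ((Real.log 2 + Real.log 3 + 2 * |Real.log (-lam)|) +
        (2 * |Real.log (‖a (n + 1) ω‖)| +
         3 * |Real.log (‖b (n + 1) ω‖)| +
         |Real.log (‖a (n + 2) ω‖)|))) atTop (𝓝 0) := by
    have t0 := tendsto_const_div_atTop_nhds_zero_nat
      (Real.log 2 + Real.log 3 + 2 * |Real.log (-lam)|)
    have ta1 := tendsto_shift_div (f := fun n => |Real.log (‖a n ω‖)|)
      (fun n => abs_nonneg _) h3 1
    have ta2 := tendsto_shift_div (f := fun n => |Real.log (‖a n ω‖)|)
      (fun n => abs_nonneg _) h3 2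
    have tb1 := tendsto_shift_div (f := fun n => |Real.log (‖b n ω‖)|)
      (fun n => abs_nonneg _) h4 1
    have hsum := (t0.add ((ta1.const_mul (2:ℝ)).add (tb1.const_mul (3:ℝ)))).add ta2
    have hsum0 : Tendsto (fun n : ℕ =>
        ((Real.log 2 + Real.log 3 + 2 * |Real.log (-lam)|) / n +
          (2 * (|Real.log (‖a (n + 1) ω‖)| / n) +
           3 * (|Real.log (‖b (n + 1) ω‖)| / n))) +
          |Real.log (‖a (n + 2) ω‖)| / n) atTop (𝓝 0) := by
      simpa using hsum
    refine hsum0.congr fun n => by ring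
  apply squeeze_zero' ?_ ?_ hG
  · filter_upwards with n
    have h := (xseq_log_bound (fun m => a m ω) (fun m => b m ω) lam hlam h1 h2 n).1
    have hn : (0:ℝ) ≤ 1 / (n : ℝ) := by positivity
    exact mul_nonneg hn h
  · filter_upwards with n
    have h := (xseq_log_bound (fun m => a m ω) (fun m => b m ω) lam hlam h1 h2 n).2
    have hn : (0:ℝ) ≤ 1 / (n : ℝ) := by positivity
    exact mul_le_mul_of_nonneg_left h hn
end

section
/- Fix λ < 0 and assume (H2). Then there is no measurable family {V(X) : X ∈ (ℂ∖{0})⁴} of one-dimensional complex linear subspaces of ℂ² such that, for (π_a ⊗ π_a ⊗ π_a ⊗ π_b ⊗ π_b ⊗ π_b)-almost every (a₁, a₂, a₃, b₀, b₁, b₂) ∈ ℂ⁶, the matrix g(a₂, a₃, b₁, b₂) maps V(a₂, a₁, b₁, b₀) onto V(a₃, a₂, b₂, b₁). -/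
open MeasureTheory ProbabilityTheory Matrix

/-- The 2×2 transfer matrix `g(a, a', b, b')` with first row
`((λ − |a|² − |b'|²)/(a'* b'), −a·b*/(a'* b'))` and second row `(1, 0)`. -/
noncomputable def gmat (lam : ℝ) (a a' b b' : ℂ) : Matrix (Fin 2) (Fin 2) ℂ :=
  !![((lam : ℂ) - (‖a‖ ^ 2 : ℝ) - (‖b'‖ ^ 2 : ℝ)) /
      ((starRingEnd ℂ) a' * b'),
    -(a * (starRingEnd ℂ) b) / ((starRingEnd ℂ) a' * b');
    1, 0]

namespace Statement19Aux

open Set Complex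

local notation "conj'" => starRingEnd ℂ

/-- The homogeneous form of the equivariance equation along one transfer step. -/
def EdgeEq (lam : ℝ) (a b a' b' : ℂ) (P Q : Fin 2 → ℂ) : Prop :=
  (((lam : ℂ) - a * conj' a - b' * conj' b') * P 0 - a * conj' b * P 1) * Q 1
    = conj' a' * b' * P 0 * Q 0

lemma vec_ne_zero_iff {P : Fin 2 → ℂ} (h : P ≠ 0) : P 0 ≠ 0 ∨ P 1 ≠ 0 := by
  by_contra hc
  push_neg at hc
  exact h (funext fun i => by fin_cases i <;> simp [hc.1, hc.2])

lemma alpha_ne {lam : ℝ} (hlam : lam < 0) (a b' : ℂ) :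
    ((lam : ℂ) - a * conj' a - b' * conj' b') ≠ 0 := by
  rw [Complex.mul_conj, Complex.mul_conj,
    show ((lam : ℂ) - (normSq a : ℝ) - (normSq b' : ℝ))
      = ((lam - normSq a - normSq b' : ℝ) : ℂ) by push_cast; ring]
  exact Complex.ofReal_ne_zero.mpr
    (by have := Complex.normSq_nonneg a; have := Complex.normSq_nonneg b'; linarith)

lemma cross_trans {x y z : Fin 2 → ℂ} (hz : z ≠ 0) (hxz : x 0 * z 1 - x 1 * z 0 = 0)
    (hyz : y 0 * z 1 - y 1 * z 0 = 0) : x 0 * y 1 - x 1 * y 0 = 0 := by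
  rcases vec_ne_zero_iff hz with h | h
  · have h0 : (x 0 * y 1 - x 1 * y 0) * z 0 = 0 := by
      linear_combination y 0 * hxz - x 0 * hyz
    exact (mul_eq_zero.1 h0).resolve_right h
  · have h1 : (x 0 * y 1 - x 1 * y 0) * z 1 = 0 := by
      linear_combination y 1 * hxz - x 1 * hyz
    exact (mul_eq_zero.1 h1).resolve_right h

lemma parallel_of_cross {P P' : Fin 2 → ℂ} (h : P 0 * P' 1 - P 1 * P' 0 = 0) (hP : P ≠ 0) :
    ∃ c : ℂ, P' = c • P := by
  rcases vec_ne_zero_iff hP with h0 | h1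
  · refine ⟨P' 0 / P 0, funext fun i => ?_⟩
    fin_cases i
    · simp [div_mul_cancel₀, h0]
    · show P' 1 = P' 0 / P 0 * P 1
      field_simp
      linear_combination h
  · refine ⟨P' 1 / P 1, funext fun i => ?_⟩
    fin_cases i
    · show P' 0 = P' 1 / P 1 * P 0
      field_simp
      linear_combination -h
    · simp [div_mul_cancel₀, h1]

lemma edge_glue {lam : ℝ} {a b a' b' : ℂ} {P P' K : Fin 2 → ℂ}
    (h1 : EdgeEq lam a b a' b' P K) (h2 : EdgeEq lam a b a' b' P' K)
    (hK : K ≠ 0) (ha : a ≠ 0) (hb : b ≠ 0) (ha' : a' ≠ 0) (hb' : b' ≠ 0) :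
    P 0 * P' 1 - P 1 * P' 0 = 0 := by
  set α := ((lam : ℂ) - a * conj' a - b' * conj' b') with hα
  set β := a * conj' b with hβ
  set γ := conj' a' * b' with hγ
  have hβ0 : β ≠ 0 := mul_ne_zero ha (by simpa using hb)
  have hγ0 : γ ≠ 0 := mul_ne_zero (by simpa using ha') hb'
  have c1 : (![α * P 0 - β * P 1, γ * P 0]) 0 * K 1
      - (![α * P 0 - β * P 1, γ * P 0]) 1 * K 0 = 0 := by
    unfold EdgeEq at h1
    simp only [Matrix.cons_val_zero, Matrix.cons_val_one, Matrix.head_cons]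
    linear_combination h1
  have c2 : (![α * P' 0 - β * P' 1, γ * P' 0]) 0 * K 1
      - (![α * P' 0 - β * P' 1, γ * P' 0]) 1 * K 0 = 0 := by
    unfold EdgeEq at h2
    simp only [Matrix.cons_val_zero, Matrix.cons_val_one, Matrix.head_cons]
    linear_combination h2
  have c3 := cross_trans hK c1 c2
  simp only [Matrix.cons_val_zero, Matrix.cons_val_one, Matrix.head_cons] at c3
  have : β * γ * (P 0 * P' 1 - P 1 * P' 0) = 0 := by linear_combination c3
  rcases mul_eq_zero.1 this with h | h
  · exact absurd h (mul_ne_zero hβ0 hγ0)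
  · linear_combination h

lemma edge_cancel_left {lam : ℝ} {a b a' b' c : ℂ} {P Q : Fin 2 → ℂ} (hc : c ≠ 0)
    (h : EdgeEq lam a b a' b' (c • P) Q) : EdgeEq lam a b a' b' P Q := by
  unfold EdgeEq at h ⊢
  simp only [Pi.smul_apply, smul_eq_mul] at h
  apply mul_left_cancel₀ hc
  linear_combination h

lemma edge_cancel_right {lam : ℝ} {a b a' b' c : ℂ} {P Q : Fin 2 → ℂ} (hc : c ≠ 0)
    (h : EdgeEq lam a b a' b' P (c • Q)) : EdgeEq lam a b a' b' P Q := by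
  unfold EdgeEq at h ⊢
  simp only [Pi.smul_apply, smul_eq_mul] at h
  apply mul_left_cancel₀ hc
  linear_combination h

lemma edge_p0 {lam : ℝ} {a b a' b' : ℂ} {P Q : Fin 2 → ℂ} (hlam : lam < 0)
    (ha : a ≠ 0) (hb : b ≠ 0) (ha' : a' ≠ 0) (hb' : b' ≠ 0)
    (hP : P ≠ 0) (hQ : Q ≠ 0)
    (h1 : EdgeEq lam a b a' b' P Q) (h2 : EdgeEq lam a' b' a b Q P) : P 0 ≠ 0 := by
  intro h0
  have hP1 : P 1 ≠ 0 := by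
    rcases vec_ne_zero_iff hP with h | h
    · exact absurd h0 h
    · exact h
  unfold EdgeEq at h1 h2
  rw [h0] at h1 h2
  have hQ1 : Q 1 = 0 := by
    have : a * conj' b * P 1 * Q 1 = 0 := by linear_combination -h1
    rcases mul_eq_zero.1 this with h | h
    · rcases mul_eq_zero.1 h with h' | h'
      · exact absurd h' (mul_ne_zero ha (by simpa using hb))
      · exact absurd h' hP1
    · exact h
  have hQ0 : Q 0 ≠ 0 := by
    rcases vec_ne_zero_iff hQ with h | h
    · exact h
    · exact absurd hQ1 h
  rw [hQ1] at h2
  have : ((lam : ℂ) - a' * conj' a' - b * conj' b) * Q 0 * P 1 = 0 := by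
    linear_combination h2
  rcases mul_eq_zero.1 this with h | h
  · rcases mul_eq_zero.1 h with h' | h'
    · exact alpha_ne hlam a' b h'
    · exact hQ0 h'
  · exact hP1 h

lemma edge_mutual {lam : ℝ} {a b a' b' : ℂ} {P Q : Fin 2 → ℂ} (hlam : lam < 0)
    (ha : a ≠ 0) (hb : b ≠ 0) (ha' : a' ≠ 0) (hb' : b' ≠ 0)
    (hP : P ≠ 0) (hQ : Q ≠ 0)
    (h1 : EdgeEq lam a b a' b' P Q) (h2 : EdgeEq lam a' b' a b Q P) :
    P 0 ≠ 0 ∧ P 1 ≠ 0 ∧ Q 0 ≠ 0 ∧ Q 1 ≠ 0 := by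
  have hP0 := edge_p0 hlam ha hb ha' hb' hP hQ h1 h2
  have hQ0 := edge_p0 hlam ha' hb' ha hb hQ hP h2 h1
  have hQ1 : Q 1 ≠ 0 := by
    intro h
    unfold EdgeEq at h1
    rw [h] at h1
    have : conj' a' * b' * P 0 * Q 0 = 0 := by linear_combination -h1
    rcases mul_eq_zero.1 this with hh | hh
    · rcases mul_eq_zero.1 hh with hh | hh
      · exact (mul_ne_zero (by simpa using ha') hb') hh
      · exact hP0 hh
    · exact hQ0 hh
  have hP1 : P 1 ≠ 0 := by
    intro h
    unfold EdgeEq at h2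
    rw [h] at h2
    have : conj' a * b * Q 0 * P 0 = 0 := by linear_combination -h2
    rcases mul_eq_zero.1 this with hh | hh
    · rcases mul_eq_zero.1 hh with hh | hh
      · exact (mul_ne_zero (by simpa using ha) hb) hh
      · exact hQ0 hh
    · exact hP0 hh
  exact ⟨hP0, hP1, hQ0, hQ1⟩

lemma algebra_main {lam : ℝ} (hlam : lam < 0)
    {A0 A1 A2 A3 A5 B0 B B3 B5 : ℂ}
    (hA0 : A0 ≠ 0) (hA1 : A1 ≠ 0) (hA2 : A2 ≠ 0) (hA3 : A3 ≠ 0) (hA5 : A5 ≠ 0)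
    (hB0 : B0 ≠ 0) (hB : B ≠ 0) (hB3 : B3 ≠ 0) (hB5 : B5 ≠ 0)
    (hA12 : ‖A1‖ ≠ ‖A2‖)
    {s u v t V1 V2 W T1 T2 M1 M2 M3 : Fin 2 → ℂ}
    (hs : s ≠ 0) (hu : u ≠ 0) (hv : v ≠ 0) (ht : t ≠ 0) (hV1 : V1 ≠ 0) (hV2 : V2 ≠ 0)
    (hW : W ≠ 0) (hT1 : T1 ≠ 0) (hT2 : T2 ≠ 0) (hM1 : M1 ≠ 0) (hM2 : M2 ≠ 0) (hM3 : M3 ≠ 0)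
    (E1 : EdgeEq lam A0 B0 A1 B s u)
    (E2 : EdgeEq lam A0 B0 A2 B s v)
    (E3 : EdgeEq lam A0 B0 A3 B3 s t)
    (E4 : EdgeEq lam A1 B A3 B3 u T1)
    (E5 : EdgeEq lam A2 B A3 B3 v T2)
    (E6 : EdgeEq lam A3 B3 A1 B t V1)
    (E7 : EdgeEq lam A3 B3 A2 B t V2)
    (E8 : EdgeEq lam A3 B3 A0 B0 T1 W)
    (E9 : EdgeEq lam A3 B3 A0 B0 T2 W)
    (E10 : EdgeEq lam A3 B3 A5 B5 t M3)
    (E11 : EdgeEq lam A3 B3 A5 B5 T1 M3)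
    (E12 : EdgeEq lam A1 B A5 B5 u M1)
    (E13 : EdgeEq lam A1 B A5 B5 V1 M1)
    (E14 : EdgeEq lam A2 B A5 B5 v M2)
    (E15 : EdgeEq lam A2 B A5 B5 V2 M2)
    (E16 : EdgeEq lam A0 B0 A1 B W u) : False := by
  -- gluings
  obtain ⟨c1, hc1⟩ := parallel_of_cross (edge_glue E10 E11 hM3 hA3 hB3 hA5 hB5) ht
  have hc1ne : c1 ≠ 0 := fun h => hT1 (by rw [hc1, h, zero_smul])
  obtain ⟨c2, hc2⟩ := parallel_of_cross (edge_glue E8 E9 hW hA3 hB3 hA0 hB0) hT1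
  have hc2ne : c2 ≠ 0 := fun h => hT2 (by rw [hc2, h, zero_smul])
  obtain ⟨cw, hcw⟩ := parallel_of_cross (edge_glue E1 E16 hu hA0 hB0 hA1 hB) hs
  have hcwne : cw ≠ 0 := fun h => hW (by rw [hcw, h, zero_smul])
  obtain ⟨cv1, hcv1⟩ := parallel_of_cross (edge_glue E12 E13 hM1 hA1 hB hA5 hB5) hu
  have hcv1ne : cv1 ≠ 0 := fun h => hV1 (by rw [hcv1, h, zero_smul])
  obtain ⟨cv2, hcv2⟩ := parallel_of_cross (edge_glue E14 E15 hM2 hA2 hB hA5 hB5) hv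
  have hcv2ne : cv2 ≠ 0 := fun h => hV2 (by rw [hcv2, h, zero_smul])
  -- transported edges
  have R4 : EdgeEq lam A1 B A3 B3 u t := edge_cancel_right hc1ne (hc1 ▸ E4)
  have R5 : EdgeEq lam A2 B A3 B3 v t := by
    have := hc2 ▸ E5
    have h5 : EdgeEq lam A2 B A3 B3 v ((c2 * c1) • t) := by
      rw [hc1, smul_smul] at this; exact this
    exact edge_cancel_right (mul_ne_zero hc2ne hc1ne) h5
  have R6 : EdgeEq lam A3 B3 A1 B t u := edge_cancel_right hcv1ne (hcv1 ▸ E6)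
  have R7 : EdgeEq lam A3 B3 A2 B t v := edge_cancel_right hcv2ne (hcv2 ▸ E7)
  have R8 : EdgeEq lam A3 B3 A0 B0 t s := by
    have h8 : EdgeEq lam A3 B3 A0 B0 (c1 • t) (cw • s) := by rw [← hc1, ← hcw]; exact E8
    exact edge_cancel_left hc1ne (edge_cancel_right hcwne h8)
  -- nonvanishing
  obtain ⟨hs0, hs1, ht0, ht1⟩ := edge_mutual hlam hA0 hB0 hA3 hB3 hs ht E3 R8
  obtain ⟨hu0, hu1, -, -⟩ := edge_mutual hlam hA1 hB hA3 hB3 hu ht R4 R6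
  obtain ⟨hv0, hv1, -, -⟩ := edge_mutual hlam hA2 hB hA3 hB3 hv ht R5 R7
  -- main computation
  set X0 : ℂ := A0 * conj' A0 with hX0
  set X1 : ℂ := A1 * conj' A1 with hX1
  set X2 : ℂ := A2 * conj' A2 with hX2
  set Y : ℂ := B * conj' B with hY
  set Ps : ℂ := X0 * s 0 + A0 * conj' B0 * s 1 with hPs
  unfold EdgeEq at E1 E2 E3 R4 R5
  have star_u : A1 * conj' B * u 1 * s 0 = (Ps - X1 * s 0) * u 0 := by
    apply mul_left_cancel₀ ht1
    linear_combination u 0 * E3 - s 0 * R4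
  have star_v : A2 * conj' B * v 1 * s 0 = (Ps - X2 * s 0) * v 0 := by
    apply mul_left_cancel₀ ht1
    linear_combination v 0 * E3 - s 0 * R5
  have P1' : (((lam : ℂ) - Y) * s 0 - Ps) * (Ps - X1 * s 0) = X1 * Y * s 0 ^ 2 := by
    apply mul_right_cancel₀ hu0
    linear_combination (A1 * conj' B * s 0) * E1
      - (((lam : ℂ) - Y) * s 0 - Ps) * star_u
  have P2' : (((lam : ℂ) - Y) * s 0 - Ps) * (Ps - X2 * s 0) = X2 * Y * s 0 ^ 2 := by
    apply mul_right_cancel₀ hv0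
    linear_combination (A2 * conj' B * s 0) * E2
      - (((lam : ℂ) - Y) * s 0 - Ps) * star_v
  have hX12 : X1 - X2 ≠ 0 := by
    rw [hX1, hX2, Complex.mul_conj, Complex.mul_conj]
    intro h
    apply hA12
    have : Complex.normSq A1 = Complex.normSq A2 := by
      have := sub_eq_zero.1 h
      exact_mod_cast this
    rw [Complex.norm_def, Complex.norm_def, this]
  have hfac : (X1 - X2) * s 0 * (((lam : ℂ)) * s 0 - Ps) = 0 := by
    linear_combination P2' - P1'
  have hPsl : Ps = (lam : ℂ) * s 0 := by
    rcases mul_eq_zero.1 hfac with h | h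
    · rcases mul_eq_zero.1 h with h' | h'
      · exact absurd h' hX12
      · exact absurd h' hs0
    · linear_combination -h
  have hYzero : Y = 0 := by
    have h1 : (-(Y * s 0)) * (((lam : ℂ) - X1) * s 0) = X1 * Y * s 0 ^ 2 := by
      rw [← P1', hPsl]; ring
    have h2 : Y * (lam : ℂ) * s 0 ^ 2 = 0 := by linear_combination -h1
    have hl : ((lam : ℂ)) ≠ 0 := Complex.ofReal_ne_zero.mpr (ne_of_lt hlam)
    have hs02 : (s 0) ^ 2 ≠ 0 := pow_ne_zero 2 hs0
    rcases mul_eq_zero.1 h2 with h | h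
    · rcases mul_eq_zero.1 h with h' | h'
      · exact h'
      · exact absurd h' hl
    · exact absurd h hs02
  rw [hY, Complex.mul_conj] at hYzero
  exact hB (Complex.normSq_eq_zero.1 (by exact_mod_cast hYzero))

lemma habs (z : ℂ) : ((‖z‖ ^ 2 : ℝ) : ℂ) = z * conj' z := by
  rw [Complex.sq_norm]
  exact_mod_cast (Complex.mul_conj z).symm

lemma edge_of_map {lam : ℝ} {a b a' b' : ℂ} (ha' : a' ≠ 0) (hb' : b' ≠ 0)
    {u u' : Fin 2 → ℂ}
    (h : Submodule.map (Matrix.mulVecLin (gmat lam a a' b b'))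
        (Submodule.span ℂ {u}) = Submodule.span ℂ {u'}) :
    EdgeEq lam a b a' b' u u' := by
  have hm : (gmat lam a a' b b').mulVecLin u ∈ Submodule.span ℂ {u'} := by
    rw [← h]
    exact Submodule.mem_map_of_mem (Submodule.mem_span_singleton_self u)
  obtain ⟨c, hc⟩ := Submodule.mem_span_singleton.1 hm
  have h0 := congrFun hc 0
  have h1 := congrFun hc 1
  simp only [Matrix.mulVecLin_apply, Matrix.mulVec, dotProduct,
    Fin.sum_univ_two, gmat, Matrix.of_apply, Matrix.cons_val', Matrix.cons_val_zero,
    Matrix.cons_val_one, Matrix.head_cons, Matrix.empty_val', Matrix.cons_val_fin_one,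
    Matrix.head_fin_const, Pi.smul_apply, smul_eq_mul] at h0 h1
  have hγ : conj' a' * b' ≠ 0 := mul_ne_zero (by simpa using ha') hb'
  have h0' : conj' a' * b' * (c * u' 0)
      = ((lam : ℂ) - a * conj' a - b' * conj' b') * u 0 - a * conj' b * u 1 := by
    rw [h0, ← habs a, ← habs b']
    have ha'c : conj' a' ≠ 0 := by simpa using ha'
    field_simp
    ring
  have h1' : u 0 = c * u' 1 := by rw [h1]; ring
  unfold EdgeEq
  linear_combination -u' 1 * h0' - (conj' a' * b') * u' 0 * h1'

section Measure

variable {πa πb : Measure ℂ} [IsProbabilityMeasure πa] [IsProbabilityMeasure πb]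

lemma aux_map_pi_sel {ι : Type*} [Fintype ι] (m : ι → Measure ℂ)
    [∀ i, IsProbabilityMeasure (m i)] {n : ℕ} (j : Fin n → ι) (hj : Function.Injective j) :
    Measure.map (fun w : ι → ℂ => w ∘ j) (Measure.pi m) = Measure.pi (fun t => m (j t)) := by
  classical
  haveI : ∀ t : Fin n, SigmaFinite (m (j t)) := fun t => inferInstance
  refine (Measure.pi_eq (μ := fun t => m (j t)) fun s hs => ?_).symm
  have hmeas : Measurable (fun w : ι → ℂ => w ∘ j) :=
    measurable_pi_lambda _ fun t => measurable_pi_apply _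
  rw [Measure.map_apply hmeas (MeasurableSet.univ_pi hs)]
  have hpre : (fun w : ι → ℂ => w ∘ j) ⁻¹' (univ.pi s)
      = univ.pi (fun i => ⋂ (t : Fin n) (_ : j t = i), s t) := by
    ext w
    simp only [mem_preimage, mem_pi, mem_univ, forall_true_left, mem_iInter]
    constructor
    · rintro h i t rfl; exact h t
    · intro h t; exact h (j t) t rfl
  rw [hpre, Measure.pi_pi]
  have hS : ∀ t : Fin n, (⋂ (t' : Fin n) (_ : j t' = j t), s t') = s t := by
    intro t
    apply Subset.antisymm
    · exact iInter_subset_of_subset t (by simp)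
    · intro x hx
      simp only [mem_iInter]
      intro t' ht'; rw [show t' = t from hj ht']; exact hx
  calc ∏ i, m i (⋂ (t : Fin n) (_ : j t = i), s t)
      = ∏ i ∈ Finset.univ.image j, m i (⋂ (t : Fin n) (_ : j t = i), s t) := by
        refine (Finset.prod_subset (Finset.subset_univ _) fun i _ hi => ?_).symm
        have : (⋂ (t : Fin n) (_ : j t = i), s t) = univ := by
          refine iInter_eq_univ.2 fun t => ?_
          refine iInter_eq_univ.2 fun ht => absurd ?_ hi
          exact ht ▸ Finset.mem_image_of_mem j (Finset.mem_univ t)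
        rw [this]; exact measure_univ
    _ = ∏ t, m (j t) (⋂ (t' : Fin n) (_ : j t' = j t), s t') := by
        rw [Finset.prod_image (fun t _ t' _ h => hj h)]
    _ = ∏ t, m (j t) (s t) := by simp_rw [hS]

lemma aux_map_nested (μ1 μ2 μ3 μ4 μ5 μ6 : Measure ℂ)
    [IsProbabilityMeasure μ1] [IsProbabilityMeasure μ2] [IsProbabilityMeasure μ3]
    [IsProbabilityMeasure μ4] [IsProbabilityMeasure μ5] [IsProbabilityMeasure μ6] :
    Measure.map (fun w : Fin 6 → ℂ => (w 0, w 1, w 2, w 3, w 4, w 5))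
      (Measure.pi ![μ1, μ2, μ3, μ4, μ5, μ6])
      = μ1.prod (μ2.prod (μ3.prod (μ4.prod (μ5.prod μ6)))) := by
  haveI : ∀ i : Fin 6, SigmaFinite (![μ1, μ2, μ3, μ4, μ5, μ6] i) := by
    intro i; fin_cases i
    exacts [(inferInstance : SigmaFinite μ1), (inferInstance : SigmaFinite μ2),
      (inferInstance : SigmaFinite μ3), (inferInstance : SigmaFinite μ4),
      (inferInstance : SigmaFinite μ5), (inferInstance : SigmaFinite μ6)]
  set ν6 := μ1.prod (μ2.prod (μ3.prod (μ4.prod (μ5.prod μ6)))) with hν6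
  set Φ : ℂ × ℂ × ℂ × ℂ × ℂ × ℂ → (Fin 6 → ℂ) :=
    fun z => ![z.1, z.2.1, z.2.2.1, z.2.2.2.1, z.2.2.2.2.1, z.2.2.2.2.2] with hΦdef
  have h1 : Measurable fun z : ℂ × ℂ × ℂ × ℂ × ℂ × ℂ => z.1 := measurable_fst
  have h2 : Measurable fun z : ℂ × ℂ × ℂ × ℂ × ℂ × ℂ => z.2.1 :=
    measurable_fst.comp measurable_snd
  have h3 : Measurable fun z : ℂ × ℂ × ℂ × ℂ × ℂ × ℂ => z.2.2.1 :=
    measurable_fst.comp (measurable_snd.comp measurable_snd)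
  have h4 : Measurable fun z : ℂ × ℂ × ℂ × ℂ × ℂ × ℂ => z.2.2.2.1 :=
    measurable_fst.comp (measurable_snd.comp (measurable_snd.comp measurable_snd))
  have h5 : Measurable fun z : ℂ × ℂ × ℂ × ℂ × ℂ × ℂ => z.2.2.2.2.1 :=
    measurable_fst.comp
      (measurable_snd.comp (measurable_snd.comp (measurable_snd.comp measurable_snd)))
  have h6 : Measurable fun z : ℂ × ℂ × ℂ × ℂ × ℂ × ℂ => z.2.2.2.2.2 :=
    measurable_snd.comp
      (measurable_snd.comp (measurable_snd.comp (measurable_snd.comp measurable_snd)))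
  have hΦm : Measurable Φ := by
    apply measurable_pi_lambda
    intro t
    fin_cases t <;>
      simp only [hΦdef, Matrix.cons_val_zero, Matrix.cons_val_one, Matrix.head_cons,
        Matrix.cons_val_succ, Fin.mk_one, Matrix.cons_val'] <;>
      first
        | exact h1 | exact h2 | exact h3 | exact h4 | exact h5 | exact h6
  have hUm : Measurable (fun w : Fin 6 → ℂ => (w 0, w 1, w 2, w 3, w 4, w 5)) :=
    (measurable_pi_apply 0).prodMk ((measurable_pi_apply 1).prodMk
      ((measurable_pi_apply 2).prodMk ((measurable_pi_apply 3).prodMk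
        ((measurable_pi_apply 4).prodMk (measurable_pi_apply 5)))))
  have hΦ : Measure.pi ![μ1, μ2, μ3, μ4, μ5, μ6] = Measure.map Φ ν6 := by
    refine Measure.pi_eq fun s hs => ?_
    rw [Measure.map_apply hΦm (MeasurableSet.univ_pi hs)]
    have hpre : Φ ⁻¹' (univ.pi s)
        = s 0 ×ˢ (s 1 ×ˢ (s 2 ×ˢ (s 3 ×ˢ (s 4 ×ˢ s 5)))) := by
      ext z
      simp only [hΦdef, mem_preimage, Set.mem_pi, mem_univ, forall_true_left,
        Fin.forall_fin_succ, IsEmpty.forall_iff, Matrix.cons_val_zero,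
        Matrix.cons_val_succ, Set.mem_prod]
      tauto
    rw [hpre, hν6]
    rw [Measure.prod_prod, Measure.prod_prod, Measure.prod_prod, Measure.prod_prod,
      Measure.prod_prod, Fin.prod_univ_six]
    rw [show (![μ1, μ2, μ3, μ4, μ5, μ6] (5 : Fin 6)) = μ6 from rfl,
      show (![μ1, μ2, μ3, μ4, μ5, μ6] (4 : Fin 6)) = μ5 from rfl,
      show (![μ1, μ2, μ3, μ4, μ5, μ6] (3 : Fin 6)) = μ4 from rfl,
      show (![μ1, μ2, μ3, μ4, μ5, μ6] (2 : Fin 6)) = μ3 from rfl,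
      show (![μ1, μ2, μ3, μ4, μ5, μ6] (1 : Fin 6)) = μ2 from rfl,
      show (![μ1, μ2, μ3, μ4, μ5, μ6] (0 : Fin 6)) = μ1 from rfl]
    ring
  have hcomp : (fun w : Fin 6 → ℂ => (w 0, w 1, w 2, w 3, w 4, w 5)) ∘ Φ = id := by
    funext z
    show (z.1, z.2.1, z.2.2.1, z.2.2.2.1, z.2.2.2.2.1, z.2.2.2.2.2) = z
    rfl
  rw [hΦ, Measure.map_map hUm hΦm, hcomp, Measure.map_id]

lemma aux_pull (E : Set (ℂ × ℂ × ℂ × ℂ × ℂ × ℂ)) (hE : MeasurableSet E)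
    (hae : ∀ᵐ p ∂(πa.prod (πa.prod (πa.prod (πb.prod (πb.prod πb))))), p ∈ E)
    (i1 i2 i3 i4 i5 i6 : Fin 9)
    (hinj : Function.Injective ![i1, i2, i3, i4, i5, i6])
    (h1 : (i1 : ℕ) < 5) (h2 : (i2 : ℕ) < 5) (h3 : (i3 : ℕ) < 5)
    (h4 : 5 ≤ (i4 : ℕ)) (h5 : 5 ≤ (i5 : ℕ)) (h6 : 5 ≤ (i6 : ℕ)) :
    ∀ᵐ w ∂(Measure.pi (fun i : Fin 9 => if (i : ℕ) < 5 then πa else πb)),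
      (w i1, w i2, w i3, w i4, w i5, w i6) ∈ E := by
  set m : Fin 9 → Measure ℂ := fun i => if (i : ℕ) < 5 then πa else πb with hm
  haveI : ∀ i : Fin 9, IsProbabilityMeasure (m i) := by
    intro i; rw [hm]; dsimp only; split_ifs <;> infer_instance
  set j : Fin 6 → Fin 9 := ![i1, i2, i3, i4, i5, i6] with hj
  have hms : (fun t : Fin 6 => m (j t)) = ![πa, πa, πa, πb, πb, πb] := by
    funext t
    fin_cases t
    · show m i1 = πa
      rw [hm]; exact if_pos h1
    · show m i2 = πa
      rw [hm]; exact if_pos h2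
    · show m i3 = πa
      rw [hm]; exact if_pos h3
    · show m i4 = πb
      rw [hm]; exact if_neg (by omega)
    · show m i5 = πb
      rw [hm]; exact if_neg (by omega)
    · show m i6 = πb
      rw [hm]; exact if_neg (by omega)
  have hsel := aux_map_pi_sel m j hinj
  have hnested := aux_map_nested πa πa πa πb πb πb
  have hselm : Measurable (fun w : Fin 9 → ℂ => w ∘ j) :=
    measurable_pi_lambda _ fun t => measurable_pi_apply _
  have hUm : Measurable (fun w : Fin 6 → ℂ => (w 0, w 1, w 2, w 3, w 4, w 5)) :=
    (measurable_pi_apply 0).prodMk ((measurable_pi_apply 1).prodMk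
      ((measurable_pi_apply 2).prodMk ((measurable_pi_apply 3).prodMk
        ((measurable_pi_apply 4).prodMk (measurable_pi_apply 5)))))
  have hlaw : Measure.map (fun w : Fin 9 → ℂ => (w i1, w i2, w i3, w i4, w i5, w i6))
      (Measure.pi m) = πa.prod (πa.prod (πa.prod (πb.prod (πb.prod πb)))) := by
    have hcomp : (fun w : Fin 9 → ℂ => (w i1, w i2, w i3, w i4, w i5, w i6))
        = (fun w : Fin 6 → ℂ => (w 0, w 1, w 2, w 3, w 4, w 5))
          ∘ (fun w : Fin 9 → ℂ => w ∘ j) := rfl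
    rw [hcomp, ← Measure.map_map hUm hselm, hsel, hms, hnested]
  have hT : Measurable (fun w : Fin 9 → ℂ => (w i1, w i2, w i3, w i4, w i5, w i6)) :=
    (measurable_pi_apply i1).prodMk ((measurable_pi_apply i2).prodMk
      ((measurable_pi_apply i3).prodMk ((measurable_pi_apply i4).prodMk
        ((measurable_pi_apply i5).prodMk (measurable_pi_apply i6)))))
  have := hlaw ▸ hae
  exact (MeasureTheory.ae_map_iff hT.aemeasurable hE).1 this

end Measure

end Statement19Aux

/-- A measurable family of one-dimensional subspaces of `ℂ²` indexed by
`(ℂ∖{0})⁴` is encoded by a measurable nonvanishing selection `v` of a spanning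
vector: the subspace attached to `X` is `span ℂ {v X}`. The statement: there is
no such family which is a.s. equivariant under the `g`-matrices. -/
theorem statement19
    (πa πb : Measure ℂ) [IsProbabilityMeasure πa] [IsProbabilityMeasure πb]
    (lam : ℝ) (hlam : lam < 0)
    -- (H2)
    (H2a : πa ≪ (volume : Measure ℂ)) (H2b : πb ≪ (volume : Measure ℂ)) :
    ¬ ∃ v : ℂ × ℂ × ℂ × ℂ → Fin 2 → ℂ,
        Measurable v ∧ (∀ X, v X ≠ 0) ∧
        (∀ᵐ p : ℂ × ℂ × ℂ × ℂ × ℂ × ℂ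
            ∂(πa.prod (πa.prod (πa.prod (πb.prod (πb.prod πb))))),
          -- `p = (a₁, a₂, a₃, b₀, b₁, b₂)`
          Submodule.map
            (Matrix.mulVecLin (gmat lam p.2.1 p.2.2.1 p.2.2.2.2.1 p.2.2.2.2.2))
            (Submodule.span ℂ {v (p.2.1, p.1, p.2.2.2.2.1, p.2.2.2.1)}) =
          Submodule.span ℂ {v (p.2.2.1, p.2.1, p.2.2.2.2.2, p.2.2.2.2.1)}) := by
  classical
  rintro ⟨v, hvm, hvne, hae0⟩
  open Statement19Aux Set in
  -- notation for the conjugation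
  have mconj : Measurable (starRingEnd ℂ) := Complex.continuous_conj.measurable
  set ν6 := πa.prod (πa.prod (πa.prod (πb.prod (πb.prod πb)))) with hν6def
  -- measurable projections
  have h1 : Measurable fun z : ℂ × ℂ × ℂ × ℂ × ℂ × ℂ => z.1 := measurable_fst
  have h2 : Measurable fun z : ℂ × ℂ × ℂ × ℂ × ℂ × ℂ => z.2.1 :=
    measurable_fst.comp measurable_snd
  have h3 : Measurable fun z : ℂ × ℂ × ℂ × ℂ × ℂ × ℂ => z.2.2.1 :=
    measurable_fst.comp (measurable_snd.comp measurable_snd)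
  have h4 : Measurable fun z : ℂ × ℂ × ℂ × ℂ × ℂ × ℂ => z.2.2.2.1 :=
    measurable_fst.comp (measurable_snd.comp (measurable_snd.comp measurable_snd))
  have h5 : Measurable fun z : ℂ × ℂ × ℂ × ℂ × ℂ × ℂ => z.2.2.2.2.1 :=
    measurable_fst.comp
      (measurable_snd.comp (measurable_snd.comp (measurable_snd.comp measurable_snd)))
  have h6 : Measurable fun z : ℂ × ℂ × ℂ × ℂ × ℂ × ℂ => z.2.2.2.2.2 :=
    measurable_snd.comp
      (measurable_snd.comp (measurable_snd.comp (measurable_snd.comp measurable_snd)))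
  -- the bad-point set
  set E : Set (ℂ × ℂ × ℂ × ℂ × ℂ × ℂ) :=
    {p | Statement19Aux.EdgeEq lam p.2.1 p.2.2.2.2.1 p.2.2.1 p.2.2.2.2.2
      (v (p.2.1, p.1, p.2.2.2.2.1, p.2.2.2.1))
      (v (p.2.2.1, p.2.1, p.2.2.2.2.2, p.2.2.2.2.1))} with hEdef
  have hVm : Measurable fun p : ℂ × ℂ × ℂ × ℂ × ℂ × ℂ =>
      v (p.2.1, p.1, p.2.2.2.2.1, p.2.2.2.1) :=
    hvm.comp (h2.prodMk (h1.prodMk (h5.prodMk h4)))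
  have hV'm : Measurable fun p : ℂ × ℂ × ℂ × ℂ × ℂ × ℂ =>
      v (p.2.2.1, p.2.1, p.2.2.2.2.2, p.2.2.2.2.1) :=
    hvm.comp (h3.prodMk (h2.prodMk (h6.prodMk h5)))
  have hV0 := (measurable_pi_apply (0 : Fin 2)).comp hVm
  have hV1 := (measurable_pi_apply (1 : Fin 2)).comp hVm
  have hV'0 := (measurable_pi_apply (0 : Fin 2)).comp hV'm
  have hV'1 := (measurable_pi_apply (1 : Fin 2)).comp hV'm
  have hE : MeasurableSet E := by
    rw [hEdef]
    show MeasurableSet {p : ℂ × ℂ × ℂ × ℂ × ℂ × ℂ |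
      (((lam : ℂ) - p.2.1 * (starRingEnd ℂ) p.2.1
          - p.2.2.2.2.2 * (starRingEnd ℂ) p.2.2.2.2.2)
          * v (p.2.1, p.1, p.2.2.2.2.1, p.2.2.2.1) 0
        - p.2.1 * (starRingEnd ℂ) p.2.2.2.2.1 * v (p.2.1, p.1, p.2.2.2.2.1, p.2.2.2.1) 1)
        * v (p.2.2.1, p.2.1, p.2.2.2.2.2, p.2.2.2.2.1) 1
      = (starRingEnd ℂ) p.2.2.1 * p.2.2.2.2.2 * v (p.2.1, p.1, p.2.2.2.2.1, p.2.2.2.1) 0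
        * v (p.2.2.1, p.2.1, p.2.2.2.2.2, p.2.2.2.2.1) 0}
    apply measurableSet_eq_fun
    · exact ((((measurable_const.sub (h2.mul (mconj.comp h2))).sub
        (h6.mul (mconj.comp h6))).mul hV0).sub
        ((h2.mul (mconj.comp h5)).mul hV1)).mul hV'1
    · exact (((mconj.comp h3).mul h6).mul hV0).mul hV'0
  -- a.e. the third and sixth coordinates are nonzero
  haveI : NullSingletonClass (volume : Measure ℂ) := inferInstance
  have hπa0 : πa {(0 : ℂ)} = 0 := H2a (measure_singleton 0)
  have hπb0 : πb {(0 : ℂ)} = 0 := H2b (measure_singleton 0)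
  have hset3 : ν6 {p : ℂ × ℂ × ℂ × ℂ × ℂ × ℂ | p.2.2.1 = 0} = 0 := by
    have : {p : ℂ × ℂ × ℂ × ℂ × ℂ × ℂ | p.2.2.1 = 0}
        = (univ : Set ℂ) ×ˢ ((univ : Set ℂ) ×ˢ (({0} : Set ℂ)
          ×ˢ (univ : Set (ℂ × ℂ × ℂ)))) := by
      ext p
      simp only [Set.mem_setOf_eq, Set.mem_prod, Set.mem_univ, Set.mem_singleton_iff,
        true_and, and_true]
    rw [this, hν6def, Measure.prod_prod, Measure.prod_prod, Measure.prod_prod, hπa0]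
    simp
  have hset6 : ν6 {p : ℂ × ℂ × ℂ × ℂ × ℂ × ℂ | p.2.2.2.2.2 = 0} = 0 := by
    have : {p : ℂ × ℂ × ℂ × ℂ × ℂ × ℂ | p.2.2.2.2.2 = 0}
        = (univ : Set ℂ) ×ˢ ((univ : Set ℂ) ×ˢ ((univ : Set ℂ)
          ×ˢ ((univ : Set ℂ) ×ˢ ((univ : Set ℂ) ×ˢ ({0} : Set ℂ))))) := by
      ext p
      simp only [Set.mem_setOf_eq, Set.mem_prod, Set.mem_univ, Set.mem_singleton_iff,
        true_and, and_true]
    rw [this, hν6def, Measure.prod_prod, Measure.prod_prod, Measure.prod_prod,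
      Measure.prod_prod, Measure.prod_prod, hπb0]
    simp
  have hne3 : ∀ᵐ p ∂ν6, p.2.2.1 ≠ 0 := by
    rw [ae_iff]
    convert hset3 using 2
    ext p; simp
  have hne6 : ∀ᵐ p ∂ν6, p.2.2.2.2.2 ≠ 0 := by
    rw [ae_iff]
    convert hset6 using 2
    ext p; simp
  have hae : ∀ᵐ p ∂ν6, p ∈ E := by
    refine ((hae0.and (hne3.and hne6)).mono ?_)
    rintro p ⟨hmap, hp3, hp6⟩
    exact Statement19Aux.edge_of_map hp3 hp6 hmap
  -- move to the big product space
  set m : Fin 9 → Measure ℂ := fun i => if (i : ℕ) < 5 then πa else πb with hmdef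
  haveI hmprob : ∀ i : Fin 9, IsProbabilityMeasure (m i) := by
    intro i; rw [hmdef]; dsimp only; split_ifs <;> infer_instance
  haveI hmatom : ∀ i : Fin 9, NullSingletonClass (m i) := by
    intro i
    rw [hmdef]; dsimp only; split_ifs
    · exact ⟨fun x => H2a (measure_singleton x)⟩
    · exact ⟨fun x => H2b (measure_singleton x)⟩
  set M9 := Measure.pi m with hM9def
  haveI : IsProbabilityMeasure M9 := by rw [hM9def]; infer_instance
  -- the sixteen instances
  have I01 := Statement19Aux.aux_pull E hE hae 4 0 1 8 5 6 (by decide)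
    (by decide) (by decide) (by decide) (by decide) (by decide) (by decide)
  have I02 := Statement19Aux.aux_pull E hE hae 4 0 2 8 5 6 (by decide)
    (by decide) (by decide) (by decide) (by decide) (by decide) (by decide)
  have I03 := Statement19Aux.aux_pull E hE hae 4 0 3 8 5 7 (by decide)
    (by decide) (by decide) (by decide) (by decide) (by decide) (by decide)
  have I04 := Statement19Aux.aux_pull E hE hae 0 1 3 5 6 7 (by decide)
    (by decide) (by decide) (by decide) (by decide) (by decide) (by decide)
  have I05 := Statement19Aux.aux_pull E hE hae 0 2 3 5 6 7 (by decide)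
    (by decide) (by decide) (by decide) (by decide) (by decide) (by decide)
  have I06 := Statement19Aux.aux_pull E hE hae 0 3 1 5 7 6 (by decide)
    (by decide) (by decide) (by decide) (by decide) (by decide) (by decide)
  have I07 := Statement19Aux.aux_pull E hE hae 0 3 2 5 7 6 (by decide)
    (by decide) (by decide) (by decide) (by decide) (by decide) (by decide)
  have I08 := Statement19Aux.aux_pull E hE hae 1 3 0 6 7 5 (by decide)
    (by decide) (by decide) (by decide) (by decide) (by decide) (by decide)
  have I09 := Statement19Aux.aux_pull E hE hae 2 3 0 6 7 5 (by decide)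
    (by decide) (by decide) (by decide) (by decide) (by decide) (by decide)
  have I10 := Statement19Aux.aux_pull E hE hae 0 3 4 5 7 8 (by decide)
    (by decide) (by decide) (by decide) (by decide) (by decide) (by decide)
  have I11 := Statement19Aux.aux_pull E hE hae 1 3 4 6 7 8 (by decide)
    (by decide) (by decide) (by decide) (by decide) (by decide) (by decide)
  have I12 := Statement19Aux.aux_pull E hE hae 0 1 4 5 6 8 (by decide)
    (by decide) (by decide) (by decide) (by decide) (by decide) (by decide)
  have I13 := Statement19Aux.aux_pull E hE hae 3 1 4 7 6 8 (by decide)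
    (by decide) (by decide) (by decide) (by decide) (by decide) (by decide)
  have I14 := Statement19Aux.aux_pull E hE hae 0 2 4 5 6 8 (by decide)
    (by decide) (by decide) (by decide) (by decide) (by decide) (by decide)
  have I15 := Statement19Aux.aux_pull E hE hae 3 2 4 7 6 8 (by decide)
    (by decide) (by decide) (by decide) (by decide) (by decide) (by decide)
  have I16 := Statement19Aux.aux_pull E hE hae 3 0 1 7 5 6 (by decide)
    (by decide) (by decide) (by decide) (by decide) (by decide) (by decide)
  -- coordinates nonzero a.e.
  have hnz : ∀ i : Fin 9, ∀ᵐ w ∂M9, w i ≠ 0 := fun i =>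
    MeasureTheory.Measure.ae_eval_ne m i 0
  -- a.e. |w 1| ≠ |w 2|
  have habs12 : ∀ᵐ w ∂M9, ‖w 1‖ ≠ ‖w 2‖ := by
    have hinj2 : Function.Injective (![1, 2] : Fin 2 → Fin 9) := by decide
    have hsel2 := Statement19Aux.aux_map_pi_sel m (![1, 2] : Fin 2 → Fin 9) hinj2
    have hms2 : (fun t : Fin 2 => m ((![1, 2] : Fin 2 → Fin 9) t)) = ![πa, πa] := by
      funext t; fin_cases t
      · show m 1 = πa
        rw [hmdef]; exact if_pos (by decide)
      · show m 2 = πa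
        rw [hmdef]; exact if_pos (by decide)
    have hfin2 := MeasureTheory.measurePreserving_finTwoArrow_vec πa πa
    have hselm2 : Measurable (fun w : Fin 9 → ℂ => w ∘ (![1, 2] : Fin 2 → Fin 9)) :=
      measurable_pi_lambda _ fun t => measurable_pi_apply _
    have hB := Measure.map_map
      (MeasurableEquiv.finTwoArrow (α := ℂ)).measurable hselm2 (μ := M9)
    have hA : Measure.map (⇑(MeasurableEquiv.finTwoArrow (α := ℂ)))
        (Measure.map (fun w : Fin 9 → ℂ => w ∘ (![1, 2] : Fin 2 → Fin 9)) M9)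
        = πa.prod πa := by
      rw [hM9def, hsel2, hms2, hfin2.map_eq]
    have hcomp : (⇑(MeasurableEquiv.finTwoArrow (α := ℂ)))
        ∘ (fun w : Fin 9 → ℂ => w ∘ (![1, 2] : Fin 2 → Fin 9))
        = fun w : Fin 9 → ℂ => (w 1, w 2) := by
      funext w
      simp [MeasurableEquiv.finTwoArrow]
    have hlaw2 : Measure.map (fun w : Fin 9 → ℂ => (w 1, w 2)) M9 = πa.prod πa := by
      rw [← hcomp, ← hB, hA]
    have hSmeas : MeasurableSet {z : ℂ × ℂ | ‖z.1‖ = ‖z.2‖} :=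
      measurableSet_eq_fun (continuous_norm.measurable.comp measurable_fst)
        (continuous_norm.measurable.comp measurable_snd)
    have hSnull : (πa.prod πa) {z : ℂ × ℂ | ‖z.1‖ = ‖z.2‖} = 0 := by
      rw [Measure.prod_apply hSmeas]
      have : ∀ x : ℂ, πa (Prod.mk x ⁻¹' {z : ℂ × ℂ | ‖z.1‖ = ‖z.2‖})
          = 0 := by
        intro x
        have hset : Prod.mk x ⁻¹' {z : ℂ × ℂ | ‖z.1‖ = ‖z.2‖}
            = Metric.sphere (0 : ℂ) ‖x‖ := by
          ext y
          simp [Complex.dist_eq, eq_comm]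
        rw [hset]
        exact H2a (Measure.addHaar_sphere volume 0 _)
      simp only [this]
      simp
    have hprodae : ∀ᵐ z ∂(πa.prod πa), ‖z.1‖ ≠ ‖z.2‖ := by
      rw [ae_iff]
      convert hSnull using 2
      ext z; simp
    have hT2 : Measurable (fun w : Fin 9 → ℂ => (w 1, w 2)) :=
      (measurable_pi_apply 1).prodMk (measurable_pi_apply 2)
    have := hlaw2 ▸ hprodae
    exact (MeasureTheory.ae_map_iff hT2.aemeasurable hSmeas.compl).1 this
  -- get a single point
  have hbig := I01.and (I02.and (I03.and (I04.and (I05.and (I06.and (I07.and (I08.and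
    (I09.and (I10.and (I11.and (I12.and (I13.and (I14.and (I15.and I16))))))))))))))
  have hnzall := (hnz 0).and ((hnz 1).and ((hnz 2).and ((hnz 3).and ((hnz 4).and
    ((hnz 5).and ((hnz 6).and ((hnz 7).and (hnz 8))))))))
  haveI : (MeasureTheory.ae M9).NeBot := by
    refine MeasureTheory.ae_neBot.mpr ?_
    intro h0
    have huniv : (M9 : Measure (Fin 9 → ℂ)) Set.univ = 1 := measure_univ
    rw [h0] at huniv
    simp at huniv
  obtain ⟨w, hw⟩ := ((hbig.and (hnzall.and habs12))).exists
  obtain ⟨⟨e1, e2, e3, e4, e5, e6, e7, e8, e9, e10, e11, e12, e13, e14, e15, e16⟩,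
    ⟨n0, n1, n2, n3, n4, n5, n6, n7, n8⟩, nabs⟩ := hw
  exact Statement19Aux.algebra_main hlam n0 n1 n2 n3 n4 n5 n6 n7 n8 nabs
    (hvne _) (hvne _) (hvne _) (hvne _) (hvne _) (hvne _) (hvne _) (hvne _)
    (hvne _) (hvne _) (hvne _) (hvne _)
    e1 e2 e3 e4 e5 e6 e7 e8 e9 e10 e11 e12 e13 e14 e15 e16
end
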